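/- Suppose λ > 0 and w ∈ ℝ^K has all entries strictly positive with wᵀ B = λ wᵀ (a positive left eigenvector of B). Then for every feasible power vector P (P_k ≥ 0 for all k and ∑_k P_k ≤ P_T), the minimum achievable rate is bounded by min_{k} R_k(P) ≤ log₂(1 + 1/λ). -/

import Mathlib

/-- Achievable rate of user `k` in downlink NOMA:
`R_k(P) = log₂(1 + P_k g_k / (g_k ∑_{j<k} P_j + 1))`
(for `k = 0`, i.e. user 1, the sum is empty and this is `log₂(1 + P_1 g_1)`). -/
noncomputable def rate {K : ℕ} (g P : Fin K → ℝ) (k : Fin K) : ℝ :=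
  Real.logb 2
    (1 + P k * g k / (g k * (∑ j ∈ Finset.univ.filter (fun j => j < k), P j) + 1))

/-- A power vector is feasible if it is entrywise nonnegative and respects the
total power budget. -/
def Feasible (K : ℕ) (P_T : ℝ) (P : Fin K → ℝ) : Prop :=
  (∀ k, 0 ≤ P k) ∧ ∑ k, P k ≤ P_T

/-- The minimum achievable rate among the `K` users. -/
noncomputable def minRate {K : ℕ} (g P : Fin K → ℝ) : ℝ :=
  ⨅ k, rate g P k

/-- The strictly lower-triangular all-ones matrix `A`, `A_{ik} = 1` iff `k < i`. -/
def Amat (K : ℕ) : Matrix (Fin K) (Fin K) ℝ :=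
  Matrix.of fun i k => if k < i then 1 else 0

/-- The vector `b` with entries `b_k = 1/(P_T g_k)`. -/
noncomputable def bvec (K : ℕ) (g : Fin K → ℝ) (P_T : ℝ) : Fin K → ℝ :=
  fun k => 1 / (P_T * g k)

/-- The matrix `B = A + b 𝟙ᵀ`, i.e. `B_{ik} = A_{ik} + b_i`. -/
noncomputable def Bmat (K : ℕ) (g : Fin K → ℝ) (P_T : ℝ) : Matrix (Fin K) (Fin K) ℝ :=
  Amat K + Matrix.of fun i _ => bvec K g P_T i

theorem stmt_5 (K : ℕ) (hK : 1 ≤ K) (g : Fin K → ℝ)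
    (hgpos : ∀ k, 0 < g k) (hgdec : StrictAnti g)
    (P_T : ℝ) (hPT : 0 < P_T)
    (lam : ℝ) (hlam : 0 < lam)
    (w : Fin K → ℝ) (hw : ∀ k, 0 < w k)
    (heig : Matrix.vecMul w (Bmat K g P_T) = lam • w) :
    ∀ P : Fin K → ℝ, Feasible K P_T P → minRate g P ≤ Real.logb 2 (1 + 1 / lam) := by
  intro P hP
  obtain ⟨hPnn, hPsum⟩ := hP
  by_contra hcon
  push_neg at hcon
  have hne : Nonempty (Fin K) := ⟨⟨0, hK⟩⟩
  -- pointwise strict inequality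
  have key : ∀ k, (Bmat K g P_T).mulVec P k < lam * P k := by
    intro k
    have hS : 0 ≤ ∑ j ∈ Finset.univ.filter (fun j => j < k), P j :=
      Finset.sum_nonneg fun j _ => hPnn j
    set S := ∑ j ∈ Finset.univ.filter (fun j => j < k), P j with hSdef
    have hd : 0 < g k * S + 1 := by nlinarith [hgpos k]
    have hrk : Real.logb 2 (1 + 1 / lam) < rate g P k := by
      calc Real.logb 2 (1 + 1 / lam) < minRate g P := hcon
        _ ≤ rate g P k := ciInf_le (Set.Finite.bddBelow (Set.finite_range _)) k
    have hratio : 1 / lam < P k * g k / (g k * S + 1) := by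
      by_contra hle
      push_neg at hle
      have h1 : (0:ℝ) < 1 + P k * g k / (g k * S + 1) := by
        have : 0 ≤ P k * g k / (g k * S + 1) :=
          div_nonneg (mul_nonneg (hPnn k) (hgpos k).le) hd.le
        linarith
      have hle2 : 1 + P k * g k / (g k * S + 1) ≤ 1 + 1 / lam := by linarith
      have := Real.logb_le_logb_of_le (by norm_num : (1:ℝ) < 2) h1 hle2
      unfold rate at hrk
      rw [← hSdef] at hrk
      linarith
    -- from ratio > 1/λ: g k * S + 1 < lam * (P k * g k)
    have h2 : g k * S + 1 < lam * (P k * g k) := by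
      have := (div_lt_div_iff₀ hlam hd).mp hratio
      linarith
    -- compute (B P)_k
    have hBP : (Bmat K g P_T).mulVec P k = S + (∑ j, P j) / (P_T * g k) := by
      simp only [Bmat, Amat, bvec, Matrix.mulVec, dotProduct, Matrix.add_apply,
        Matrix.of_apply, add_mul, Finset.sum_add_distrib, ite_mul, one_mul, zero_mul]
      rw [Finset.sum_ite, Finset.sum_const_zero, add_zero]
      have hh : ∑ x : Fin K, 1 / (P_T * g k) * P x = (∑ j : Fin K, P j) / (P_T * g k) := by
        rw [Finset.sum_div]
        exact Finset.sum_congr rfl fun j _ => by ring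
      rw [hh, ← hSdef]
    rw [hBP]
    have h3 : (∑ j, P j) / (P_T * g k) ≤ 1 / g k := by
      rw [div_le_div_iff₀ (mul_pos hPT (hgpos k)) (hgpos k)]
      nlinarith [hgpos k]
    have hgk := hgpos k
    have h4 : S + 1 / g k < lam * P k := by
      rw [show S + 1 / g k = (g k * S + 1) / g k by field_simp, div_lt_iff₀ hgk]
      nlinarith
    linarith
  -- sum against w
  have hsum : ∑ k, w k * (Bmat K g P_T).mulVec P k < ∑ k, w k * (lam * P k) :=
    Finset.sum_lt_sum_of_nonempty Finset.univ_nonempty fun k _ =>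
      by exact mul_lt_mul_of_pos_left (key k) (hw k)
  have heq : ∑ k, w k * (Bmat K g P_T).mulVec P k = ∑ k, w k * (lam * P k) := by
    have h : dotProduct w ((Bmat K g P_T).mulVec P) = dotProduct (lam • w) P := by
      rw [Matrix.dotProduct_mulVec, heig]
    simp only [dotProduct, Pi.smul_apply, smul_eq_mul] at h
    rw [h]
    exact Finset.sum_congr rfl fun k _ => by ring
  linarith
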